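/- For all v, w ∈ W, the set {xw : x ∈ W, x ≤ v} has a maximum element in the Bruhat order, and this maximum equals the Demazure product v * w. -/

import Mathlib

open scoped Classical

/-- Data of a root system with a fixed choice of simple roots: an ambient
`ℚ`-vector space `V`, a set of roots `Φ` with a distinguished subset `pos` of
positive roots, a coroot functional `coroot β = ⟨·, β^∨⟩` for each root, and
simple roots `α 1, …, α r`. -/
structure RootData where
  r : ℕ
  V : Type
  [grp : AddCommGroup V]
  [mod : Module ℚ V]
  Φ : Set V
  pos : Set V
  coroot : V → Module.Dual ℚ V
  α : Fin r → V

attribute [instance] RootData.grp RootData.mod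

namespace RootData

variable (R : RootData)

/-- The group of linear automorphisms of `V`, in which the Weyl group lives. -/
abbrev Aut : Type := R.V ≃ₗ[ℚ] R.V

/-- The linear map `v ↦ v - ⟨v, β^∨⟩ β`. -/
noncomputable def reflMap (β : R.V) : R.V →ₗ[ℚ] R.V :=
  LinearMap.id - (R.coroot β).smulRight β

/-- The reflection `s_β` associated to a root `β`, as a linear automorphism. -/
noncomputable def s (β : R.V) : R.Aut :=
  if h : (R.reflMap β).comp (R.reflMap β) = LinearMap.id then
    LinearEquiv.ofLinear (R.reflMap β) (R.reflMap β) h h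
  else LinearEquiv.refl ℚ R.V

/-- The simple reflections `s_i := s_{α_i}`. -/
noncomputable def S (i : Fin R.r) : R.Aut := R.s (R.α i)

/-- The Weyl group `W`, generated by the simple reflections. -/
noncomputable def weylGroup : Subgroup R.Aut := Subgroup.closure (Set.range R.S)

/-- The product `s_{i_1} ⋯ s_{i_k}` of a word in the simple reflections. -/
noncomputable def wordProd (l : List (Fin R.r)) : R.Aut := (l.map R.S).prod

/-- The length function on `W`: least length of a word in the simple
reflections expressing the given element. -/
noncomputable def len (w : R.Aut) : ℕ :=
  sInf {n | ∃ l : List (Fin R.r), l.length = n ∧ R.wordProd l = w}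

/-- A word is reduced if its length equals the length of its product. -/
def Reduced (l : List (Fin R.r)) : Prop := R.len (R.wordProd l) = l.length

/-- The Bruhat order on `W`: `u ≤ w` iff some reduced word for `w` has a
subword whose product is `u`. -/
def BruhatLE (u w : R.Aut) : Prop :=
  ∃ l : List (Fin R.r), R.Reduced l ∧ R.wordProd l = w ∧
    ∃ l' : List (Fin R.r), l'.Sublist l ∧ R.wordProd l' = u

/-- Strict Bruhat order. -/
def BruhatLT (u w : R.Aut) : Prop := R.BruhatLE u w ∧ u ≠ w

/-- One step of the Demazure product: `s_i * w := max {w, s_i w}`. -/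
noncomputable def dmulStep (i : Fin R.r) (x : R.Aut) : R.Aut :=
  if R.len x < R.len (R.S i * x) then R.S i * x else x

/-- Demazure product of a word in the simple reflections against `w`:
`s_{i_1} * (s_{i_2} * (⋯ * (s_{i_k} * w)))`. -/
noncomputable def dmulList (l : List (Fin R.r)) (w : R.Aut) : R.Aut :=
  l.foldr R.dmulStep w

/-- The Demazure product `v * w` on the Weyl group, computed by choosing a
reduced word for `v` (it is independent of this choice). -/
noncomputable def dmul (v w : R.Aut) : R.Aut :=
  if h : ∃ l : List (Fin R.r), R.Reduced l ∧ R.wordProd l = v then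
    R.dmulList h.choose w
  else v * w

/-- The parabolic subgroup `W_{P_i}` generated by the simple reflections
`s_j`, `j ≠ i`. -/
noncomputable def WPar (i : Fin R.r) : Subgroup R.Aut :=
  Subgroup.closure (R.S '' {j | j ≠ i})

/-- `W^{P_i}`: the set of minimal-length representatives of cosets of
`W/W_{P_i}`. -/
def minReps (i : Fin R.r) : Set R.Aut :=
  {v | v ∈ R.weylGroup ∧ ∀ p ∈ R.WPar i, R.len v ≤ R.len (v * p)}

/-- `u` is the minimal-length representative of the coset `w W_{P_i}`. -/
def IsMinRep (i : Fin R.r) (u w : R.Aut) : Prop :=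
  u ∈ R.minReps i ∧ u⁻¹ * w ∈ R.WPar i

/-- A weight is dominant if it pairs nonnegatively with every simple coroot. -/
def Dominant (lam : R.V) : Prop := ∀ i : Fin R.r, 0 ≤ R.coroot (R.α i) lam

/-- The dual action of the Weyl group on `V* `: `(u f)(v) = f(u⁻¹ v)`. -/
noncomputable def dualAct (u : R.Aut) (f : Module.Dual ℚ R.V) : Module.Dual ℚ R.V :=
  f.comp (u.symm : R.V →ₗ[ℚ] R.V)

/-- The Demazure polytope `P_λ^w := conv {uλ : u ∈ W, u ≤ w}`. -/
noncomputable def demPolytope (lam : R.V) (w : R.Aut) : Set R.V :=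
  convexHull ℚ {m | ∃ u : R.Aut, u ∈ R.weylGroup ∧ R.BruhatLE u w ∧ m = u lam}

/-- Membership in the weight lattice `X`. -/
def IsWeight (lam : R.V) : Prop := ∀ β ∈ R.Φ, ∃ m : ℤ, R.coroot β lam = (m : ℚ)

/-- The root lattice `Q = ℤΦ`. -/
noncomputable def rootLattice : AddSubgroup R.V := AddSubgroup.closure R.Φ

/-- `w₀` is the longest element of the Weyl group. -/
def IsLongest (w₀ : R.Aut) : Prop :=
  w₀ ∈ R.weylGroup ∧ ∀ g ∈ R.weylGroup, R.len g ≤ R.len w₀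

/-- The positive roots `Φ_{P_i}⁺ = Φ⁺ ∩ span {α_j : j ≠ i}` of the standard
Levi subsystem. -/
def parPos (i : Fin R.r) : Set R.V :=
  {η | η ∈ R.pos ∧ η ∈ Submodule.span ℚ (R.α '' {j | j ≠ i})}

/-- The value `D_i (e^λ)` of the Demazure operator on a basis element of the
group ring `ℤ[X]`. -/
noncomputable def demOnBasis (i : Fin R.r) (lam : R.V) : R.V →₀ ℤ :=
  if 0 ≤ ⌊R.coroot (R.α i) lam⌋ then
    ∑ k ∈ Finset.range (⌊R.coroot (R.α i) lam⌋.toNat + 1),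
      Finsupp.single (lam - (k : ℚ) • R.α i) 1
  else if ⌊R.coroot (R.α i) lam⌋ = -1 then 0
  else - ∑ k ∈ Finset.range ((-⌊R.coroot (R.α i) lam⌋).toNat - 1),
      Finsupp.single (lam + ((k : ℚ) + 1) • R.α i) 1

/-- The Demazure operator `D_i`, as a `ℤ`-linear endomorphism of the group
ring `ℤ[X]` (realized as finitely supported functions `V →₀ ℤ`). -/
noncomputable def demOp (i : Fin R.r) : (R.V →₀ ℤ) →ₗ[ℤ] (R.V →₀ ℤ) :=
  Finsupp.lsum ℤ fun lam => LinearMap.toSpanSingleton ℤ (R.V →₀ ℤ) (R.demOnBasis i lam)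

/-- The Demazure character `D_{i_1} ⋯ D_{i_k} (e^λ)`. -/
noncomputable def demChar (l : List (Fin R.r)) (lam : R.V) : R.V →₀ ℤ :=
  l.foldr (fun i p => R.demOp i p) (Finsupp.single lam 1)

/-- The axioms of a finite crystallographic root system spanning `V`, with
simple roots `α_i` and positive roots `pos`. -/
structure IsRootSystem (R : RootData) : Prop where
  finite : R.Φ.Finite
  span_top : Submodule.span ℚ R.Φ = ⊤
  ne_zero : ∀ β ∈ R.Φ, β ≠ 0
  coroot_self : ∀ β ∈ R.Φ, R.coroot β β = 2
  crystallographic : ∀ β ∈ R.Φ, ∀ γ ∈ R.Φ, ∃ m : ℤ, R.coroot β γ = (m : ℚ)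
  reflection_stable : ∀ β ∈ R.Φ, ∀ γ ∈ R.Φ, γ - R.coroot β γ • β ∈ R.Φ
  simple_mem : ∀ i, R.α i ∈ R.Φ
  indep : LinearIndependent ℚ R.α
  pos_subset : R.pos ⊆ R.Φ
  pos_or_neg : ∀ β ∈ R.Φ, (β ∈ R.pos ∧ -β ∉ R.pos) ∨ (β ∉ R.pos ∧ -β ∈ R.pos)
  simple_pos : ∀ i, R.α i ∈ R.pos
  pos_nonneg_comb : ∀ β ∈ R.pos, ∃ c : Fin R.r → ℚ, (∀ i, 0 ≤ c i) ∧ β = ∑ i, c i • R.α i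


set_option linter.dupNamespace false


variable {R : RootData}

section Basics

lemma aut_mul_apply (f g : R.Aut) (x : R.V) : (f * g) x = f (g x) := rfl

lemma aut_one_apply (x : R.V) : (1 : R.Aut) x = x := rfl

lemma aut_inv_apply_apply (f : R.Aut) (x : R.V) : (f⁻¹) (f x) = x := f.symm_apply_apply x

lemma aut_apply_inv_apply (f : R.Aut) (x : R.V) : f ((f⁻¹) x) = x := f.apply_symm_apply x

lemma reflMap_apply (β x : R.V) : R.reflMap β x = x - R.coroot β x • β := rfl

lemma reflMap_invol {β : R.V} (h2 : R.coroot β β = 2) :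
    (R.reflMap β).comp (R.reflMap β) = LinearMap.id := by
  ext x
  simp only [LinearMap.comp_apply, reflMap_apply, LinearMap.id_apply, map_sub, map_smul, h2,
    smul_eq_mul]
  module

lemma s_apply (hR : R.IsRootSystem) {β : R.V} (hβ : β ∈ R.Φ) (x : R.V) :
    R.s β x = x - R.coroot β x • β := by
  rw [s, dif_pos (reflMap_invol (hR.coroot_self β hβ))]
  rfl

lemma s_s (hR : R.IsRootSystem) {β : R.V} (hβ : β ∈ R.Φ) (x : R.V) :
    R.s β (R.s β x) = x := by
  have h2 := hR.coroot_self β hβ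
  simp only [s_apply hR hβ, map_sub, map_smul, h2, smul_eq_mul]
  module

lemma s_mul_self (hR : R.IsRootSystem) {β : R.V} (hβ : β ∈ R.Φ) :
    R.s β * R.s β = 1 := by
  apply LinearEquiv.toLinearMap_injective
  apply LinearMap.ext
  intro x
  exact s_s hR hβ x

lemma s_inv (hR : R.IsRootSystem) {β : R.V} (hβ : β ∈ R.Φ) :
    (R.s β)⁻¹ = R.s β :=
  inv_eq_of_mul_eq_one_right (s_mul_self hR hβ)

lemma s_root (hR : R.IsRootSystem) {β : R.V} (hβ : β ∈ R.Φ) : R.s β β = -β := by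
  rw [s_apply hR hβ, hR.coroot_self β hβ]
  module

lemma s_mem_Phi (hR : R.IsRootSystem) {β γ : R.V} (hβ : β ∈ R.Φ) (hγ : γ ∈ R.Φ) :
    R.s β γ ∈ R.Φ := by
  rw [s_apply hR hβ]
  exact hR.reflection_stable β hβ γ hγ

lemma neg_mem_Phi (hR : R.IsRootSystem) {β : R.V} (hβ : β ∈ R.Φ) : -β ∈ R.Φ := by
  have := s_mem_Phi hR hβ hβ
  rwa [s_root hR hβ] at this

lemma not_neg_pos (hR : R.IsRootSystem) {β : R.V} (hβ : β ∈ R.pos) : -β ∉ R.pos := by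
  rcases hR.pos_or_neg β (hR.pos_subset hβ) with h | h
  · exact h.2
  · exact absurd hβ h.1

lemma neg_pos_of_not_pos (hR : R.IsRootSystem) {β : R.V} (hβ : β ∈ R.Φ) (h : β ∉ R.pos) :
    -β ∈ R.pos := by
  rcases hR.pos_or_neg β hβ with h' | h'
  · exact absurd h'.1 h
  · exact h'.2

lemma pos_ne_zero (hR : R.IsRootSystem) {β : R.V} (hβ : β ∈ R.pos) : β ≠ 0 :=
  hR.ne_zero β (hR.pos_subset hβ)

end Basics

section Words

lemma wordProd_nil : R.wordProd [] = 1 := rfl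

lemma wordProd_cons (i : Fin R.r) (l : List (Fin R.r)) :
    R.wordProd (i :: l) = R.S i * R.wordProd l := by
  simp [wordProd]

lemma wordProd_append (l₁ l₂ : List (Fin R.r)) :
    R.wordProd (l₁ ++ l₂) = R.wordProd l₁ * R.wordProd l₂ := by
  simp [wordProd]

lemma wordProd_singleton (i : Fin R.r) : R.wordProd [i] = R.S i := by
  simp [wordProd]

lemma S_mem (i : Fin R.r) : R.S i ∈ R.weylGroup :=
  Subgroup.subset_closure ⟨i, rfl⟩

lemma wordProd_mem (l : List (Fin R.r)) : R.wordProd l ∈ R.weylGroup := by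
  induction l with
  | nil => exact one_mem _
  | cons i t ih => rw [wordProd_cons]; exact mul_mem (S_mem i) ih

lemma S_eq_s (i : Fin R.r) : R.S i = R.s (R.α i) := rfl

lemma S_mul_self (hR : R.IsRootSystem) (i : Fin R.r) : R.S i * R.S i = 1 :=
  s_mul_self hR (hR.simple_mem i)

lemma S_inv (hR : R.IsRootSystem) (i : Fin R.r) : (R.S i)⁻¹ = R.S i :=
  s_inv hR (hR.simple_mem i)

lemma S_mul_S_mul (hR : R.IsRootSystem) (i : Fin R.r) (x : R.Aut) :
    R.S i * (R.S i * x) = x := by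
  rw [← mul_assoc, S_mul_self hR, one_mul]

lemma wordProd_reverse (hR : R.IsRootSystem) (l : List (Fin R.r)) :
    R.wordProd l.reverse = (R.wordProd l)⁻¹ := by
  induction l with
  | nil => simp [wordProd]
  | cons i t ih =>
    rw [List.reverse_cons, wordProd_append, ih, wordProd_singleton, wordProd_cons,
      mul_inv_rev, S_inv hR]

lemma exists_word (hR : R.IsRootSystem) {x : R.Aut} (hx : x ∈ R.weylGroup) :
    ∃ l : List (Fin R.r), R.wordProd l = x := by
  induction hx using Subgroup.closure_induction with
  | mem y hy =>
    obtain ⟨i, rfl⟩ := hy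
    exact ⟨[i], wordProd_singleton i⟩
  | one => exact ⟨[], rfl⟩
  | mul y z hy hz ihy ihz =>
    obtain ⟨ly, hly⟩ := ihy
    obtain ⟨lz, hlz⟩ := ihz
    exact ⟨ly ++ lz, by rw [wordProd_append, hly, hlz]⟩
  | inv y hy ihy =>
    obtain ⟨ly, hly⟩ := ihy
    exact ⟨ly.reverse, by rw [wordProd_reverse hR, hly]⟩

lemma len_le (l : List (Fin R.r)) : R.len (R.wordProd l) ≤ l.length :=
  Nat.sInf_le ⟨l, rfl, rfl⟩

lemma len_le_of_eq {x : R.Aut} (l : List (Fin R.r)) (h : R.wordProd l = x) :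
    R.len x ≤ l.length :=
  Nat.sInf_le ⟨l, rfl, h⟩

lemma exists_reduced (hR : R.IsRootSystem) {x : R.Aut} (hx : x ∈ R.weylGroup) :
    ∃ l : List (Fin R.r), R.Reduced l ∧ R.wordProd l = x ∧ l.length = R.len x := by
  obtain ⟨l₀, hl₀⟩ := exists_word hR hx
  have hne : {n | ∃ l : List (Fin R.r), l.length = n ∧ R.wordProd l = x}.Nonempty :=
    ⟨l₀.length, l₀, rfl, hl₀⟩
  obtain ⟨l, hlen, hprod⟩ := Nat.sInf_mem hne
  refine ⟨l, ?_, hprod, hlen⟩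
  unfold Reduced len
  rw [hprod]
  exact hlen.symm

lemma len_one : R.len 1 = 0 :=
  Nat.le_zero.mp (len_le_of_eq [] rfl)

lemma reduced_nil : R.Reduced ([] : List (Fin R.r)) := by
  unfold Reduced
  simpa [wordProd_nil] using len_one (R := R)

lemma weyl_preserves (hR : R.IsRootSystem) {w : R.Aut} (hw : w ∈ R.weylGroup) :
    (∀ γ ∈ R.Φ, w γ ∈ R.Φ) ∧ (∀ γ ∈ R.Φ, w⁻¹ γ ∈ R.Φ) := by
  induction hw using Subgroup.closure_induction with
  | mem y hy =>
    obtain ⟨i, rfl⟩ := hy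
    constructor
    · intro γ hγ; exact s_mem_Phi hR (hR.simple_mem i) hγ
    · intro γ hγ; rw [S_inv hR]; exact s_mem_Phi hR (hR.simple_mem i) hγ
  | one => exact ⟨fun γ hγ => hγ, fun γ hγ => hγ⟩
  | mul y z hy hz ihy ihz =>
    constructor
    · intro γ hγ; rw [aut_mul_apply]; exact ihy.1 _ (ihz.1 _ hγ)
    · intro γ hγ; rw [mul_inv_rev, aut_mul_apply]; exact ihz.2 _ (ihy.2 _ hγ)
  | inv y hy ihy =>
    refine ⟨ihy.2, ?_⟩
    intro γ hγ
    rw [inv_inv]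
    exact ihy.1 γ hγ

lemma weyl_apply_mem (hR : R.IsRootSystem) {w : R.Aut} (hw : w ∈ R.weylGroup)
    {γ : R.V} (hγ : γ ∈ R.Φ) : w γ ∈ R.Φ :=
  (weyl_preserves hR hw).1 γ hγ

lemma weyl_inv_apply_mem (hR : R.IsRootSystem) {w : R.Aut} (hw : w ∈ R.weylGroup)
    {γ : R.V} (hγ : γ ∈ R.Φ) : w⁻¹ γ ∈ R.Φ :=
  (weyl_preserves hR hw).2 γ hγ

end Words


section Unique

lemma refl_unique (hR : R.IsRootSystem) {δ : R.V} (hδ : δ ≠ 0)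
    (f g : Module.Dual ℚ R.V) (hf2 : f δ = 2) (hg2 : g δ = 2)
    (hfΦ : ∀ γ ∈ R.Φ, γ - f γ • δ ∈ R.Φ) (hgΦ : ∀ γ ∈ R.Φ, γ - g γ • δ ∈ R.Φ) :
    f = g := by
  have hstep : ∀ y ∈ R.Φ, y + (g y - f y) • δ ∈ R.Φ := by
    intro y hy
    have hA := hfΦ _ (hgΦ y hy)
    have heq : y - g y • δ - f (y - g y • δ) • δ = y + (g y - f y) • δ := by
      simp only [map_sub, map_smul, hf2, smul_eq_mul]
      module
    rwa [heq] at hA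
  have horbit : ∀ (γ : R.V), γ ∈ R.Φ → ∀ n : ℕ, γ + (n : ℚ) • ((g γ - f γ) • δ) ∈ R.Φ := by
    intro γ hγ n
    induction n with
    | zero => simpa using hγ
    | succ n ih =>
      have h1 := hstep _ ih
      have hval : g (γ + (n : ℚ) • ((g γ - f γ) • δ)) - f (γ + (n : ℚ) • ((g γ - f γ) • δ))
          = g γ - f γ := by
        simp only [map_add, map_smul, hf2, hg2, smul_eq_mul]
        ring
      rw [hval] at h1
      have heq2 : γ + (n : ℚ) • ((g γ - f γ) • δ) + (g γ - f γ) • δ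
          = γ + ((n : ℚ) + 1) • ((g γ - f γ) • δ) := by module
      rw [heq2] at h1
      have : ((n : ℚ) + 1) = ((n + 1 : ℕ) : ℚ) := by push_cast; ring
      rwa [this] at h1
  have hzero : ∀ γ ∈ R.Φ, f γ = g γ := by
    intro γ hγ
    by_contra hne
    have hd : g γ - f γ ≠ 0 := by
      intro h
      exact hne (by linarith [sub_eq_zero.mp h])
    have hv : (g γ - f γ) • δ ≠ 0 := smul_ne_zero hd hδ
    have hinj : Function.Injective (fun n : ℕ => γ + (n : ℚ) • ((g γ - f γ) • δ)) := by
      intro a b hab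
      simp only [add_right_inj] at hab
      have h0 : ((a : ℚ) - (b : ℚ)) • ((g γ - f γ) • δ) = 0 := by
        rw [sub_smul, hab, sub_self]
      rcases smul_eq_zero.mp h0 with h | h
      · have : (a : ℚ) = (b : ℚ) := by linarith [sub_eq_zero.mp h]
        exact_mod_cast this
      · exact absurd h hv
    exact (Set.infinite_of_injective_forall_mem hinj (fun n => horbit γ hγ n)) hR.finite
  exact LinearMap.ext_on hR.span_top hzero

lemma s_eq_form (hR : R.IsRootSystem) {δ : R.V} (hδ : δ ∈ R.Φ)
    (f : Module.Dual ℚ R.V) (hf2 : f δ = 2) (hfΦ : ∀ γ ∈ R.Φ, γ - f γ • δ ∈ R.Φ)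
    (x : R.V) : R.s δ x = x - f x • δ := by
  have h := refl_unique hR (hR.ne_zero δ hδ) (R.coroot δ) f (hR.coroot_self δ hδ) hf2
    (fun γ hγ => hR.reflection_stable δ hδ γ hγ) hfΦ
  rw [s_apply hR hδ, h]

lemma s_neg (hR : R.IsRootSystem) {β : R.V} (hβ : β ∈ R.Φ) : R.s (-β) = R.s β := by
  have hnβ : -β ∈ R.Φ := neg_mem_Phi hR hβ
  apply LinearEquiv.toLinearMap_injective; apply LinearMap.ext; intro x
  have h1 : R.s (-β) x = x - (-(R.coroot (-β))) x • β := by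
    rw [s_apply hR hnβ]
    simp only [LinearMap.neg_apply]
    module
  rw [LinearEquiv.coe_coe, LinearEquiv.coe_coe, h1]
  refine (s_eq_form hR hβ (-(R.coroot (-β))) ?_ ?_ x).symm
  · simp only [LinearMap.neg_apply]
    have h2 := hR.coroot_self (-β) hnβ
    rw [map_neg] at h2
    linarith
  · intro γ hγ
    have h3 := hR.reflection_stable (-β) hnβ γ hγ
    simpa [LinearMap.neg_apply, neg_smul, smul_neg, sub_neg_eq_add] using h3

lemma s_conj (hR : R.IsRootSystem) {u : R.Aut} (hu : u ∈ R.weylGroup) {β : R.V}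
    (hβ : β ∈ R.Φ) : R.s (u β) = u * R.s β * u⁻¹ := by
  have huβ : u β ∈ R.Φ := weyl_apply_mem hR hu hβ
  apply LinearEquiv.toLinearMap_injective; apply LinearMap.ext; intro x
  rw [LinearEquiv.coe_coe, LinearEquiv.coe_coe]
  have h1 : (u * R.s β * u⁻¹) x = x - R.coroot β (u⁻¹ x) • (u β) := by
    rw [aut_mul_apply, aut_mul_apply, s_apply hR hβ, map_sub, map_smul,
      aut_apply_inv_apply]
  rw [h1]
  have h2 := s_eq_form hR huβ ((R.coroot β).comp (u⁻¹ : R.Aut).toLinearMap)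
    (by
      simp only [LinearMap.comp_apply, LinearEquiv.coe_toLinearMap]
      rw [aut_inv_apply_apply]
      exact hR.coroot_self β hβ)
    (by
      intro γ hγ
      simp only [LinearMap.comp_apply, LinearEquiv.coe_toLinearMap]
      have h3 : γ - R.coroot β (u⁻¹ γ) • u β = u ((u⁻¹ γ) - R.coroot β (u⁻¹ γ) • β) := by
        rw [map_sub, map_smul, aut_apply_inv_apply]
      rw [h3]
      exact weyl_apply_mem hR hu (hR.reflection_stable β hβ _ (weyl_inv_apply_mem hR hu hγ)))
    x
  rw [h2]
  simp only [LinearMap.comp_apply, LinearEquiv.coe_toLinearMap]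

lemma s_eq_S_of_smul (hR : R.IsRootSystem) {β : R.V} (hβ : β ∈ R.Φ) {i : Fin R.r}
    {c : ℚ} (hc : β = c • R.α i) : R.s β = R.S i := by
  have h2 : c * R.coroot β (R.α i) = 2 := by
    have h := hR.coroot_self β hβ
    nth_rewrite 2 [hc] at h
    rwa [map_smul, smul_eq_mul] at h
  apply LinearEquiv.toLinearMap_injective; apply LinearMap.ext; intro x
  rw [LinearEquiv.coe_coe, LinearEquiv.coe_coe]
  have hform := s_eq_form hR (hR.simple_mem i) (c • R.coroot β)
      (by simpa [smul_eq_mul] using h2)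
      (by
        intro γ hγ
        have h3 := hR.reflection_stable β hβ γ hγ
        nth_rewrite 2 [hc] at h3
        simpa [smul_smul, mul_comm, LinearMap.smul_apply, smul_eq_mul] using h3) x
  rw [S_eq_s, hform, s_apply hR hβ]
  nth_rewrite 2 [hc]
  simp only [LinearMap.smul_apply, smul_eq_mul, smul_smul]
  rw [mul_comm]

end Unique

section Exchange

lemma simple_perm_pos (hR : R.IsRootSystem) {β : R.V} (hβ : β ∈ R.pos) (i : Fin R.r)
    (h : ∀ c : ℚ, β ≠ c • R.α i) : R.S i β ∈ R.pos := by
  have hβΦ : β ∈ R.Φ := hR.pos_subset hβ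
  have hsΦ : R.S i β ∈ R.Φ := s_mem_Phi hR (hR.simple_mem i) hβΦ
  by_contra hnp
  have hneg : -(R.S i β) ∈ R.pos := neg_pos_of_not_pos hR hsΦ hnp
  obtain ⟨c, hc0, hcsum⟩ := hR.pos_nonneg_comb β hβ
  obtain ⟨d, hd0, hdsum⟩ := hR.pos_nonneg_comb _ hneg
  set k := R.coroot (R.α i) β with hk
  have hS : R.S i β = β - k • R.α i := s_apply hR (hR.simple_mem i) β
  have hrel0 : (∑ j, c j • R.α j) + (∑ j, d j • R.α j) - k • R.α i = 0 := by
    have hd' : -(β - k • R.α i) = ∑ j, d j • R.α j := by rw [← hS]; exact hdsum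
    rw [← hcsum, ← hd']
    module
  have hrel : ∑ j, ((c j + d j) - (if j = i then k else 0)) • R.α j = 0 := by
    have hksum : (∑ j, (if j = i then k else 0) • R.α j) = k • R.α i := by
      simp [ite_smul, Finset.sum_ite_eq']
    simp only [sub_smul, add_smul, Finset.sum_sub_distrib, Finset.sum_add_distrib, hksum]
    exact hrel0
  have hall := Fintype.linearIndependent_iff.mp hR.indep _ hrel
  have hcz : ∀ j, j ≠ i → c j = 0 := by
    intro j hj
    have := hall j
    rw [if_neg hj] at this
    have h1 := hc0 j
    have h2 := hd0 j
    linarith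
  apply h (c i)
  rw [hcsum, Finset.sum_eq_single i]
  · intro j _ hj
    rw [hcz j hj, zero_smul]
  · intro hni
    exact absurd (Finset.mem_univ i) hni

lemma smul_of_not_pos (hR : R.IsRootSystem) {β : R.V} (hβ : β ∈ R.pos) (i : Fin R.r)
    (h : R.S i β ∉ R.pos) : ∃ c : ℚ, β = c • R.α i := by
  by_contra hcon
  push_neg at hcon
  exact h (simple_perm_pos hR hβ i hcon)

lemma strong_exchange (hR : R.IsRootSystem) :
    ∀ (l : List (Fin R.r)) (β : R.V), β ∈ R.pos →
      -((R.wordProd l)⁻¹ β) ∈ R.pos →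
      ∃ j, j < l.length ∧ R.s β * R.wordProd l = R.wordProd (l.eraseIdx j) := by
  intro l
  induction l with
  | nil =>
    intro β hβ hneg
    exfalso
    rw [wordProd_nil, inv_one] at hneg
    exact not_neg_pos hR hβ hneg
  | cons i t ih =>
    intro β hβ hneg
    have hβΦ := hR.pos_subset hβ
    have hinv : (R.wordProd (i :: t))⁻¹ β = (R.wordProd t)⁻¹ (R.S i β) := by
      rw [wordProd_cons, mul_inv_rev, aut_mul_apply, S_inv hR]
    by_cases hp : R.S i β ∈ R.pos
    · have hneg' : -((R.wordProd t)⁻¹ (R.S i β)) ∈ R.pos := by rw [← hinv]; exact hneg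
      obtain ⟨j, hj, heq⟩ := ih (R.S i β) hp hneg'
      refine ⟨j + 1, by simpa using Nat.succ_lt_succ hj, ?_⟩
      rw [List.eraseIdx_cons_succ, wordProd_cons, wordProd_cons, ← heq]
      have hconj : R.s (R.S i β) = R.S i * R.s β * (R.S i)⁻¹ := by
        rw [S_eq_s]
        exact s_conj hR (S_mem i) hβΦ
      rw [hconj, S_inv hR]
      simp only [← mul_assoc]
      rw [S_mul_self hR, one_mul]
    · obtain ⟨c, hc⟩ := smul_of_not_pos hR hβ i hp
      refine ⟨0, Nat.succ_pos _, ?_⟩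
      rw [List.eraseIdx_cons_zero, wordProd_cons, ← mul_assoc,
        s_eq_S_of_smul hR hβΦ hc, S_mul_self hR, one_mul]

lemma len_smul_le (hR : R.IsRootSystem) {b : R.Aut} (hb : b ∈ R.weylGroup) (i : Fin R.r) :
    R.len (R.S i * b) ≤ R.len b + 1 := by
  obtain ⟨l, _, hprod, hlen⟩ := exists_reduced hR hb
  have hw : R.wordProd (i :: l) = R.S i * b := by rw [wordProd_cons, hprod]
  have h := len_le_of_eq _ hw
  simp only [List.length_cons] at h
  omega

lemma len_s_mul_lt (hR : R.IsRootSystem) {b : R.Aut} (hb : b ∈ R.weylGroup) {β : R.V}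
    (hβ : β ∈ R.pos) (hneg : -(b⁻¹ β) ∈ R.pos) : R.len (R.s β * b) < R.len b := by
  obtain ⟨l, _, hprod, hlen⟩ := exists_reduced hR hb
  obtain ⟨j, hj, heq⟩ := strong_exchange hR l β hβ (by rw [hprod]; exact hneg)
  rw [hprod] at heq
  have h := len_le_of_eq _ heq.symm
  have hlen' : (l.eraseIdx j).length = l.length - 1 := by
    rw [List.length_eraseIdx]
    simp [hj]
  omega

lemma len_s_mul_gt (hR : R.IsRootSystem) {b : R.Aut} (hb : b ∈ R.weylGroup) {β : R.V}
    (hc : R.s β * b ∈ R.weylGroup) (hβ : β ∈ R.pos) (hpos : b⁻¹ β ∈ R.pos) :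
    R.len b < R.len (R.s β * b) := by
  have hβΦ := hR.pos_subset hβ
  have hkey : -((R.s β * b)⁻¹ β) ∈ R.pos := by
    rw [mul_inv_rev, aut_mul_apply, s_inv hR hβΦ, s_root hR hβΦ, map_neg, neg_neg]
    exact hpos
  have h := len_s_mul_lt hR hc hβ hkey
  rwa [← mul_assoc, s_mul_self hR hβΦ, one_mul] at h

lemma simple_dichotomy (hR : R.IsRootSystem) {b : R.Aut} (hb : b ∈ R.weylGroup) (i : Fin R.r) :
    (b⁻¹ (R.α i) ∈ R.pos ∧ R.len (R.S i * b) = R.len b + 1) ∨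
    (-(b⁻¹ (R.α i)) ∈ R.pos ∧ R.len b = R.len (R.S i * b) + 1) := by
  have hαΦ := hR.simple_mem i
  have hmem : b⁻¹ (R.α i) ∈ R.Φ := weyl_inv_apply_mem hR hb hαΦ
  by_cases hp : b⁻¹ (R.α i) ∈ R.pos
  · left
    refine ⟨hp, ?_⟩
    have h1 : R.len b < R.len (R.S i * b) :=
      len_s_mul_gt hR hb (mul_mem (S_mem i) hb) (hR.simple_pos i) hp
    have h2 := len_smul_le hR hb i
    omega
  · right
    have hneg := neg_pos_of_not_pos hR hmem hp
    refine ⟨hneg, ?_⟩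
    have h1 : R.len (R.S i * b) < R.len b := len_s_mul_lt hR hb (hR.simple_pos i) hneg
    have h2 := len_smul_le hR (mul_mem (S_mem i) hb) i
    rw [S_mul_S_mul hR] at h2
    omega

end Exchange


section Deletion

lemma exists_reduced_sublist (hR : R.IsRootSystem) :
    ∀ l : List (Fin R.r), ∃ m, m.Sublist l ∧ R.wordProd m = R.wordProd l ∧ R.Reduced m := by
  intro l
  induction l with
  | nil => exact ⟨[], List.Sublist.refl _, rfl, reduced_nil⟩
  | cons i t ih =>
    obtain ⟨m, hsub, hprod, hred⟩ := ih
    have hmW : R.wordProd m ∈ R.weylGroup := wordProd_mem m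
    rcases simple_dichotomy hR hmW i with ⟨_, hlen⟩ | ⟨hn, hlen⟩
    · refine ⟨i :: m, hsub.cons₂ i, ?_, ?_⟩
      · rw [wordProd_cons, wordProd_cons, hprod]
      · unfold Reduced at hred ⊢
        rw [wordProd_cons, hlen, List.length_cons, hred]
    · obtain ⟨j, hj, heq⟩ := strong_exchange hR m (R.α i) (hR.simple_pos i) hn
      have hprod' : R.wordProd (m.eraseIdx j) = R.wordProd (i :: t) := by
        rw [← heq, wordProd_cons, ← S_eq_s, hprod]
      refine ⟨m.eraseIdx j,
        ((List.eraseIdx_sublist m j).trans hsub).trans (List.sublist_cons_self i t),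
        hprod', ?_⟩
      unfold Reduced at hred ⊢
      have h1 : R.len (R.wordProd (m.eraseIdx j)) = R.len (R.S i * R.wordProd m) := by
        rw [← heq, S_eq_s]
      have h2 : (m.eraseIdx j).length = m.length - 1 := by
        rw [List.length_eraseIdx]
        simp [hj]
      omega

end Deletion

/-- A single step in the Bruhat chain order. -/
def cstep (R : RootData) (x y : R.Aut) : Prop :=
  x ∈ R.weylGroup ∧ y ∈ R.weylGroup ∧ ∃ β ∈ R.pos, y = R.s β * x ∧ R.len x < R.len y

/-- The Bruhat chain order. -/
def CLE (R : RootData) : R.Aut → R.Aut → Prop := Relation.ReflTransGen R.cstep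

section Chains

lemma chain_subword (hR : R.IsRootSystem) {x b : R.Aut} (hxb : R.CLE x b) :
    ∀ l : List (Fin R.r), R.Reduced l → R.wordProd l = b →
      ∃ m, m.Sublist l ∧ R.wordProd m = x := by
  induction hxb with
  | refl => exact fun l _ hl => ⟨l, List.Sublist.refl l, hl⟩
  | @tail c b'' hac hcb ih =>
    intro l hred hprod
    obtain ⟨hcW, hbW, β, hβ, hbe, hlcb⟩ := hcb
    have hβΦ := hR.pos_subset hβ
    have hcb' : R.s β * b'' = c := by rw [hbe, ← mul_assoc, s_mul_self hR hβΦ, one_mul]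
    have hbneg : -((b'')⁻¹ β) ∈ R.pos := by
      have hmem : (b'')⁻¹ β ∈ R.Φ := weyl_inv_apply_mem hR hbW hβΦ
      by_contra hcon
      have hpos : (b'')⁻¹ β ∈ R.pos := by
        rcases hR.pos_or_neg _ hmem with h | h
        · exact h.1
        · exact absurd h.2 hcon
      have hgt := len_s_mul_gt hR hbW (by rw [hcb']; exact hcW) hβ hpos
      rw [hcb'] at hgt
      omega
    obtain ⟨j, hj, heq⟩ := strong_exchange hR l β hβ (by rw [hprod]; exact hbneg)
    rw [hprod, hcb'] at heq
    obtain ⟨mc, hmcsub, hmcprod, hmcred⟩ := exists_reduced_sublist hR (l.eraseIdx j)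
    obtain ⟨m, hmsub, hmprod⟩ := ih mc hmcred (by rw [hmcprod, ← heq])
    exact ⟨m, (hmsub.trans hmcsub).trans (List.eraseIdx_sublist l j), hmprod⟩

/-- Bounded subword-implies-chain statement, for the mutual induction. -/
def F2s (R : RootData) (n : ℕ) : Prop :=
  ∀ l : List (Fin R.r), R.Reduced l → l.length ≤ n →
    ∀ m : List (Fin R.r), m.Sublist l → R.CLE (R.wordProd m) (R.wordProd l)

lemma lift_of (hR : R.IsRootSystem) (n : ℕ) (ihF : ∀ k, k < n → R.F2s k) :
    ∀ a b : R.Aut, R.CLE a b → b ∈ R.weylGroup → R.len b ≤ n → ∀ i : Fin R.r,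
      R.CLE (R.S i * a) (R.dmulStep i b) ∧ R.CLE a (R.dmulStep i b) := by
  intro a b hab
  induction hab with
  | refl =>
    intro haW hlen i
    constructor
    · by_cases hup : R.len a < R.len (R.S i * a)
      · simp only [dmulStep]
        rw [if_pos hup]
        exact Relation.ReflTransGen.refl
      · simp only [dmulStep]
        rw [if_neg hup]
        rcases simple_dichotomy hR haW i with ⟨_, h1⟩ | ⟨_, h1⟩
        · omega
        · exact Relation.ReflTransGen.single
            ⟨mul_mem (S_mem i) haW, haW, R.α i, hR.simple_pos i,
              by rw [← S_eq_s, S_mul_S_mul hR], by omega⟩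
    · by_cases hup : R.len a < R.len (R.S i * a)
      · simp only [dmulStep]
        rw [if_pos hup]
        exact Relation.ReflTransGen.single
          ⟨haW, mul_mem (S_mem i) haW, R.α i, hR.simple_pos i, by rw [S_eq_s], hup⟩
      · simp only [dmulStep]
        rw [if_neg hup]
        exact Relation.ReflTransGen.refl
  | @tail c b' hac hcb ih =>
    intro hbW hlen i
    obtain ⟨hcW, hbW', β, hβp, hbe, hlcb⟩ := hcb
    have hβΦ := hR.pos_subset hβp
    have hlenc : R.len c ≤ n := by omega
    obtain ⟨ih1, ih2⟩ := ih hcW hlenc i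
    suffices hmain : R.CLE (R.dmulStep i c) (R.dmulStep i b') by
      exact ⟨ih1.trans hmain, ih2.trans hmain⟩
    have hdichC := simple_dichotomy hR hcW i
    have hdichB := simple_dichotomy hR hbW' i
    by_cases hc : R.len c < R.len (R.S i * c) <;>
      by_cases hb : R.len b' < R.len (R.S i * b')
    · -- both ascents
      simp only [dmulStep]
      rw [if_pos hc, if_pos hb]
      have hlc : R.len (R.S i * c) = R.len c + 1 := by
        rcases hdichC with ⟨_, h⟩ | ⟨_, h⟩ <;> omega
      have hlb : R.len (R.S i * b') = R.len b' + 1 := by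
        rcases hdichB with ⟨_, h⟩ | ⟨_, h⟩ <;> omega
      have hSiβ : R.S i β ∈ R.Φ := s_mem_Phi hR (hR.simple_mem i) hβΦ
      set γ := if R.S i β ∈ R.pos then R.S i β else -(R.S i β) with hγdef
      have hγp : γ ∈ R.pos := by
        rw [hγdef]; split
        · assumption
        · exact neg_pos_of_not_pos hR hSiβ (by assumption)
      have hsγ : R.s γ = R.S i * R.s β * (R.S i)⁻¹ := by
        rw [hγdef]; split
        · exact s_conj hR (S_mem i) hβΦ
        · rw [s_neg hR hSiβ]
          exact s_conj hR (S_mem i) hβΦ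
      have heqq : R.S i * b' = R.s γ * (R.S i * c) := by
        rw [hbe, hsγ, S_inv hR, mul_assoc (R.S i * R.s β) (R.S i) (R.S i * c),
          S_mul_S_mul hR, mul_assoc]
      exact Relation.ReflTransGen.single
        ⟨mul_mem (S_mem i) hcW, mul_mem (S_mem i) hbW', γ, hγp, heqq, by omega⟩
    · -- ascent at c, descent at b'
      simp only [dmulStep]
      rw [if_pos hc, if_neg hb]
      have hlb : R.len b' = R.len (R.S i * b') + 1 := by
        rcases hdichB with ⟨_, h⟩ | ⟨_, h⟩ <;> omega
      have hSibW : R.S i * b' ∈ R.weylGroup := mul_mem (S_mem i) hbW'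
      obtain ⟨r0, hr0red, hr0prod, hr0len⟩ := exists_reduced hR hSibW
      have hlprod : R.wordProd (i :: r0) = b' := by
        rw [wordProd_cons, hr0prod, S_mul_S_mul hR]
      have hlred : R.Reduced (i :: r0) := by
        unfold Reduced
        rw [hlprod, List.length_cons, hr0len]
        omega
      have hsβb : R.s β * b' = c := by
        rw [hbe, ← mul_assoc, s_mul_self hR hβΦ, one_mul]
      have hbneg : -((b')⁻¹ β) ∈ R.pos := by
        have hmem : (b')⁻¹ β ∈ R.Φ := weyl_inv_apply_mem hR hbW' hβΦ
        by_contra hcon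
        have hpos : (b')⁻¹ β ∈ R.pos := by
          rcases hR.pos_or_neg _ hmem with h | h
          · exact h.1
          · exact absurd h.2 hcon
        have hgt := len_s_mul_gt hR hbW' (by rw [hsβb]; exact hcW) hβp hpos
        rw [hsβb] at hgt
        omega
      obtain ⟨j, hj, heq⟩ := strong_exchange hR (i :: r0) β hβp (by rw [hlprod]; exact hbneg)
      rw [hlprod, hsβb] at heq
      cases j with
      | zero =>
        rw [List.eraseIdx_cons_zero, hr0prod] at heq
        rw [heq, S_mul_S_mul hR]
        exact Relation.ReflTransGen.refl
      | succ j' =>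
        rw [List.eraseIdx_cons_succ, wordProd_cons] at heq
        have hSic : R.S i * c = R.wordProd (r0.eraseIdx j') := by
          rw [heq, S_mul_S_mul hR]
        have hr0n : r0.length < n := by
          rw [hr0len]
          omega
        have hF2 := ihF r0.length hr0n r0 hr0red le_rfl (r0.eraseIdx j')
          (List.eraseIdx_sublist r0 j')
        rw [← hSic, hr0prod] at hF2
        refine hF2.tail ⟨hSibW, hbW', R.α i, hR.simple_pos i, ?_, by omega⟩
        rw [← S_eq_s, S_mul_S_mul hR]
    · -- descent at c, ascent at b'
      simp only [dmulStep]
      rw [if_neg hc, if_pos hb]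
      exact (Relation.ReflTransGen.single ⟨hcW, hbW', β, hβp, hbe, hlcb⟩).tail
        ⟨hbW', mul_mem (S_mem i) hbW', R.α i, hR.simple_pos i, by rw [S_eq_s], hb⟩
    · -- both descents
      simp only [dmulStep]
      rw [if_neg hc, if_neg hb]
      exact Relation.ReflTransGen.single ⟨hcW, hbW', β, hβp, hbe, hlcb⟩

lemma F2_of (hR : R.IsRootSystem) (n : ℕ) (ihF : ∀ k, k < n → R.F2s k) : R.F2s n := by
  intro l hred hlen m hm
  obtain ⟨m', hm'sub, hm'prod, _⟩ := exists_reduced_sublist hR m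
  rw [← hm'prod]
  have hm' : m'.Sublist l := hm'sub.trans hm
  clear hm'prod hm'sub hm
  cases l with
  | nil =>
    rw [List.sublist_nil.mp hm']
    exact Relation.ReflTransGen.refl
  | cons i t =>
    have htW : R.wordProd t ∈ R.weylGroup := wordProd_mem t
    unfold Reduced at hred
    rw [wordProd_cons, List.length_cons] at hred
    have htred : R.Reduced t := by
      unfold Reduced
      have h1 := len_le (R := R) t
      have h2 := len_smul_le hR htW i
      omega
    have hup : R.len (R.wordProd t) < R.len (R.S i * R.wordProd t) := by
      unfold Reduced at htred
      omega
    have htlen : t.length < n := by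
      rw [List.length_cons] at hlen
      omega
    have hF2t := ihF t.length htlen
    cases hm' with
    | cons _ h =>
      have hc := hF2t t htred le_rfl m' h
      refine hc.tail ⟨htW, wordProd_mem _, R.α i, hR.simple_pos i,
        by rw [wordProd_cons, S_eq_s], ?_⟩
      rw [wordProd_cons]
      exact hup
    | cons_cons _ h =>
      have hc := hF2t t htred le_rfl _ h
      have hlift := (lift_of hR t.length (fun k hk => ihF k (hk.trans htlen)) _ _ hc htW
        (le_of_eq htred) i).1
      have hds : R.dmulStep i (R.wordProd t) = R.S i * R.wordProd t := by
        simp only [dmulStep]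
        rw [if_pos hup]
      rw [hds] at hlift
      rw [wordProd_cons, wordProd_cons]
      exact hlift

lemma F2All (hR : R.IsRootSystem) : ∀ n, R.F2s n := by
  intro n
  induction n using Nat.strong_induction_on with
  | _ n ih => exact F2_of hR n ih

lemma liftAll (hR : R.IsRootSystem) {a b : R.Aut} (hab : R.CLE a b) (hbW : b ∈ R.weylGroup)
    (i : Fin R.r) :
    R.CLE (R.S i * a) (R.dmulStep i b) ∧ R.CLE a (R.dmulStep i b) :=
  lift_of hR (R.len b) (fun k _ => F2All hR k) a b hab hbW le_rfl i

end Chains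

section Endgame

lemma dmulList_nil (w : R.Aut) : R.dmulList [] w = w := rfl

lemma dmulList_cons (i : Fin R.r) (l : List (Fin R.r)) (w : R.Aut) :
    R.dmulList (i :: l) w = R.dmulStep i (R.dmulList l w) := rfl

lemma dmulStep_mem {x : R.Aut} (hx : x ∈ R.weylGroup) (i : Fin R.r) :
    R.dmulStep i x ∈ R.weylGroup := by
  simp only [dmulStep]
  split
  · exact mul_mem (S_mem i) hx
  · exact hx

lemma dmulList_mem (l : List (Fin R.r)) {w : R.Aut} (hw : w ∈ R.weylGroup) :
    R.dmulList l w ∈ R.weylGroup := by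
  induction l with
  | nil => exact hw
  | cons i t ih => exact dmulStep_mem ih i

lemma dmul_exists_subword : ∀ (l : List (Fin R.r)) (w : R.Aut),
    ∃ m, m.Sublist l ∧ R.wordProd m * w = R.dmulList l w := by
  intro l w
  induction l with
  | nil => exact ⟨[], List.Sublist.refl _, one_mul w⟩
  | cons i t ih =>
    obtain ⟨m, hm, he⟩ := ih
    by_cases hup : R.len (R.dmulList t w) < R.len (R.S i * R.dmulList t w)
    · refine ⟨i :: m, hm.cons₂ i, ?_⟩
      rw [wordProd_cons, mul_assoc, he, dmulList_cons]
      simp only [dmulStep]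
      rw [if_pos hup]
    · refine ⟨m, hm.cons i, ?_⟩
      rw [he, dmulList_cons]
      simp only [dmulStep]
      rw [if_neg hup]

lemma dmul_dominates (hR : R.IsRootSystem) {w : R.Aut} (hw : w ∈ R.weylGroup) :
    ∀ (l m : List (Fin R.r)), m.Sublist l →
      R.CLE (R.wordProd m * w) (R.dmulList l w) := by
  intro l
  induction l with
  | nil =>
    intro m hm
    rw [List.sublist_nil.mp hm, wordProd_nil, one_mul]
    exact Relation.ReflTransGen.refl
  | cons i t ih =>
    intro m hm
    have hDW : R.dmulList t w ∈ R.weylGroup := dmulList_mem t hw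
    cases hm with
    | cons _ h =>
      have hc := ih m h
      have hstep : R.CLE (R.dmulList t w) (R.dmulStep i (R.dmulList t w)) := by
        by_cases hup : R.len (R.dmulList t w) < R.len (R.S i * R.dmulList t w)
        · refine Relation.ReflTransGen.single
            ⟨hDW, dmulStep_mem hDW i, R.α i, hR.simple_pos i, ?_, ?_⟩
          · simp only [dmulStep]
            rw [if_pos hup, S_eq_s]
          · simp only [dmulStep]
            rw [if_pos hup]
            exact hup
        · simp only [dmulStep]
          rw [if_neg hup]
          exact Relation.ReflTransGen.refl
      rw [dmulList_cons]
      exact hc.trans hstep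
    | cons_cons _ h =>
      have hc := ih _ h
      have hlift := (liftAll hR hc hDW i).1
      rw [dmulList_cons, wordProd_cons, mul_assoc]
      exact hlift

end Endgame


end RootData

theorem statement6 (R : RootData) (hR : R.IsRootSystem)
    (v w : R.Aut) (hv : v ∈ R.weylGroup) (hw : w ∈ R.weylGroup) :
    (∃ x : R.Aut, R.BruhatLE x v ∧ x * w = R.dmul v w) ∧
      ∀ x : R.Aut, R.BruhatLE x v → R.BruhatLE (x * w) (R.dmul v w) := by
  have hex : ∃ l : List (Fin R.r), R.Reduced l ∧ R.wordProd l = v := by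
    obtain ⟨l, h1, h2, _⟩ := RootData.exists_reduced hR hv
    exact ⟨l, h1, h2⟩
  have hdm : R.dmul v w = R.dmulList hex.choose w := by
    rw [RootData.dmul, dif_pos hex]
  obtain ⟨hlred, hlprod⟩ := hex.choose_spec
  constructor
  · obtain ⟨m, hm, he⟩ := RootData.dmul_exists_subword hex.choose w
    exact ⟨R.wordProd m, ⟨hex.choose, hlred, hlprod, m, hm, rfl⟩, by rw [he, hdm]⟩
  · intro x hx
    obtain ⟨l₀, h0red, h0prod, m₀, hm₀, hx₀⟩ := hx
    have hclex : R.CLE x v := by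
      have h := RootData.F2All hR l₀.length l₀ h0red le_rfl m₀ hm₀
      rwa [hx₀, h0prod] at h
    obtain ⟨m₁, hm₁, hxm₁⟩ := RootData.chain_subword hR hclex hex.choose hlred hlprod
    have hT := RootData.dmul_dominates hR hw hex.choose m₁ hm₁
    rw [hxm₁] at hT
    have hDW : R.dmulList hex.choose w ∈ R.weylGroup := RootData.dmulList_mem hex.choose hw
    obtain ⟨lD, hDred, hDprod, _⟩ := RootData.exists_reduced hR hDW
    obtain ⟨mD, hmD, hmDprod⟩ := RootData.chain_subword hR hT lD hDred hDprod
    exact ⟨lD, hDred, by rw [hDprod, hdm], mD, hmD, hmDprod⟩
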